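/- Let g: [0,∞) → R^{k×m} be the impulse response g(t) = W^{1/2} Rᵀ exp(-Lt) M of the leader-follower system, where L = RWRᵀ is a connected graph Laplacian and M is a leader-selection matrix. Then ∫₀^∞ ‖g(t)‖_F² dt = tr(Mᵀ W_o M) < ∞, where W_o = (1/2)I_n - (1/(2n))𝟙𝟙ᵀ; in particular g ∈ L². -/

import Mathlib

open Matrix MeasureTheory Finset
open Filter

section Stmt15Aux

open NormedSpace Filter

attribute [local instance] Matrix.linftyOpNormedAddCommGroup Matrix.linftyOpNormedRing
  Matrix.linftyOpNormedAlgebra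

variable {n : ℕ}

/-- entry-wise/vector coordinate derivative of `t ↦ exp (-(t•L)) *ᵥ u`. -/
private lemma stmt15_entry_hasDerivAt (L : Matrix (Fin n) (Fin n) ℝ) (u : Fin n → ℝ)
    (i : Fin n) (t : ℝ) :
    HasDerivAt (fun s : ℝ => ((exp (-(s • L))) *ᵥ u) i)
      (((exp (-(t • L)) * (-L)) *ᵥ u) i) t := by
  have h := hasDerivAt_exp_smul_const (𝕂 := ℝ) (-L) t
  let φ : Matrix (Fin n) (Fin n) ℝ →L[ℝ] ℝ := LinearMap.toContinuousLinearMap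
    { toFun := fun X : Matrix (Fin n) (Fin n) ℝ => (X *ᵥ u) i,
      map_add' := by intros; simp [Matrix.add_mulVec],
      map_smul' := by intros; simp [Matrix.smul_mulVec] }
  have h2 := φ.hasFDerivAt.comp_hasDerivAt t h
  simp only [smul_neg] at h2
  exact h2

/-- derivative of `t ↦ ‖exp (-(t•L)) *ᵥ u‖²`. -/
private lemma stmt15_dot_hasDerivAt (L : Matrix (Fin n) (Fin n) ℝ) (u : Fin n → ℝ) (t : ℝ) :
    HasDerivAt (fun s : ℝ => ((exp (-(s • L))) *ᵥ u) ⬝ᵥ ((exp (-(s • L))) *ᵥ u))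
      (-2 * (((exp (-(t • L))) *ᵥ u) ⬝ᵥ (L *ᵥ ((exp (-(t • L))) *ᵥ u)))) t := by
  set c : ℝ → Fin n → ℝ := fun s => (exp (-(s • L))) *ᵥ u with hc
  set D : Fin n → ℝ := (exp (-(t • L)) * (-L)) *ᵥ u with hD
  have hsum : HasDerivAt (fun s : ℝ => ∑ i, c s i * c s i)
      (∑ i, (D i * c t i + c t i * D i)) t := by
    apply HasDerivAt.fun_sum
    intro i _
    exact (stmt15_entry_hasDerivAt L u i t).mul (stmt15_entry_hasDerivAt L u i t)
  have hcomm : exp (-(t • L)) * L = L * exp (-(t • L)) := by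
    have h1 : Commute (t • (-L)) L := (Commute.refl L).neg_left.smul_left t
    have h2 := h1.exp_left
    rw [smul_neg] at h2
    exact h2
  have hDeq : D = -(L *ᵥ c t) := by
    rw [hD, Matrix.mul_neg, Matrix.neg_mulVec, hcomm]
    show -((L * exp (-(t • L))) *ᵥ u) = -(L *ᵥ (exp (-(t • L)) *ᵥ u))
    rw [Matrix.mulVec_mulVec]
  have hval : (∑ i, (D i * c t i + c t i * D i))
      = -2 * (c t ⬝ᵥ (L *ᵥ c t)) := by
    rw [hDeq]
    simp only [dotProduct, Pi.neg_apply, Finset.mul_sum]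
    exact Finset.sum_congr rfl fun i _ => by ring
  rw [← hval]
  convert hsum using 1
  rfl

end Stmt15Aux

/-- The impulse response `g(t) = W^{1/2} Rᵀ exp(-Lt) M` of the leader-follower
consensus system on a connected graph satisfies
`∫₀^∞ ‖g(t)‖_F² dt = tr(Mᵀ W_o M) < ∞`, where `W_o = (1/2)Iₙ - (1/(2n))𝟙𝟙ᵀ`;
in particular `g ∈ L²`. -/
theorem stmt_15 (n k m : ℕ) (hn : 0 < n)
    (src snk : Fin k → Fin n) (hloop : ∀ e, src e ≠ snk e)
    (w : Fin k → ℝ) (hw : ∀ e, 0 < w e)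
    (A : Matrix (Fin n) (Fin n) ℝ)
    (hA : ∀ i j, A i j =
      ∑ e, if (src e = i ∧ snk e = j) ∨ (src e = j ∧ snk e = i) then w e else 0)
    (hconn : ∀ i j : Fin n, Relation.ReflTransGen (fun a b => 0 < A a b) i j)
    (R : Matrix (Fin n) (Fin k) ℝ)
    (hR : ∀ i e, R i e = if src e = i then 1 else if snk e = i then -1 else 0)
    (L : Matrix (Fin n) (Fin n) ℝ)
    (hL : L = R * Matrix.diagonal w * Rᵀ)
    (v : Fin m → Fin n) (hv : Function.Injective v)
    (M : Matrix (Fin n) (Fin m) ℝ)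
    (hM : ∀ i l, M i l = if i = v l then 1 else 0)
    (g : ℝ → Matrix (Fin k) (Fin m) ℝ)
    (hg : ∀ t, g t =
      (Matrix.diagonal fun e => Real.sqrt (w e)) * Rᵀ * NormedSpace.exp (-(t • L)) * M)
    (Wo : Matrix (Fin n) (Fin n) ℝ)
    (hWo : Wo = (1/2 : ℝ) • (1 : Matrix (Fin n) (Fin n) ℝ)
        - (1/(2*(n:ℝ))) • Matrix.of (fun _ _ => (1:ℝ))) :
    IntegrableOn (fun t : ℝ => ∑ i, ∑ j, (g t i j) ^ 2) (Set.Ioi 0) volume ∧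
    (∫ t in Set.Ioi (0:ℝ), ∑ i, ∑ j, (g t i j) ^ 2) = Matrix.trace (Mᵀ * Wo * M) := by
  have hn' : (n : ℝ) ≠ 0 := Nat.cast_ne_zero.mpr hn.ne'
  set E : ℝ → Matrix (Fin n) (Fin n) ℝ := fun t => NormedSpace.exp (-(t • L)) with hE
  set ones : Fin n → ℝ := fun _ => 1 with hones
  -- E 0 = 1
  have hE0 : E 0 = 1 := by simp [hE, NormedSpace.exp_zero]
  -- Rᵀ *ᵥ y
  have hRT : ∀ y : Fin n → ℝ, Rᵀ *ᵥ y = fun e => y (src e) - y (snk e) := by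
    intro y; funext e
    have key : ∀ i, R i e * y i
        = (if i = src e then y i else 0) + (if i = snk e then -y i else 0) := by
      intro i
      rw [hR]
      by_cases h1 : src e = i
      · have h2 : ¬ i = snk e := fun h => hloop e (h1.trans h)
        rw [if_pos h1, if_pos h1.symm, if_neg h2, one_mul, add_zero]
      · have h1' : ¬ i = src e := fun h => h1 h.symm
        by_cases h2 : snk e = i
        · rw [if_neg h1, if_pos h2, if_neg h1', if_pos h2.symm, zero_add]; ring
        · have h2' : ¬ i = snk e := fun h => h2 h.symm
          rw [if_neg h1, if_neg h2, if_neg h1', if_neg h2', zero_mul, add_zero]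
    calc (Rᵀ *ᵥ y) e = ∑ i, R i e * y i := by
          simp [Matrix.mulVec, dotProduct, Matrix.transpose_apply]
      _ = ∑ i, ((if i = src e then y i else 0) + (if i = snk e then -y i else 0)) :=
          Finset.sum_congr rfl fun i _ => key i
      _ = y (src e) - y (snk e) := by
          rw [Finset.sum_add_distrib, Finset.sum_ite_eq', Finset.sum_ite_eq']
          simp [sub_eq_add_neg]
  -- quadratic form
  have hqform : ∀ y : Fin n → ℝ, y ⬝ᵥ (L *ᵥ y) = ∑ e, w e * (y (src e) - y (snk e))^2 := by
    intro y
    rw [hL]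
    rw [← Matrix.mulVec_mulVec, ← Matrix.mulVec_mulVec]
    rw [Matrix.dotProduct_mulVec (A := R)]
    rw [← Matrix.mulVec_transpose, hRT]
    simp only [dotProduct]
    refine Finset.sum_congr rfl fun e _ => ?_
    rw [Matrix.mulVec_diagonal]
    ring
  have hqnonneg : ∀ y : Fin n → ℝ, 0 ≤ y ⬝ᵥ (L *ᵥ y) := by
    intro y
    rw [hqform]
    exact Finset.sum_nonneg fun e _ => mul_nonneg (hw e).le (sq_nonneg _)
  -- L kills ones
  have hLones : L *ᵥ ones = 0 := by
    rw [hL, ← Matrix.mulVec_mulVec, ← Matrix.mulVec_mulVec, hRT]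
    have : (fun e => ones (src e) - ones (snk e)) = (0 : Fin k → ℝ) := by
      funext e; simp [hones]
    rw [this, Matrix.mulVec_zero, Matrix.mulVec_zero]
  -- exp preserves ones
  have hEones : ∀ t, E t *ᵥ ones = ones := by
    intro t
    funext i
    have hdiff : ∀ s : ℝ, HasDerivAt (fun s : ℝ => (E s *ᵥ ones) i) 0 s := by
      intro s
      have h := stmt15_entry_hasDerivAt L ones i s
      have hz : ((NormedSpace.exp (-(s • L)) * (-L)) *ᵥ ones) i = 0 := by
        rw [← Matrix.mulVec_mulVec, Matrix.neg_mulVec, hLones]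
        simp
      rw [hz] at h
      exact h
    have hconst := is_const_of_deriv_eq_zero
      (fun s => (hdiff s).differentiableAt) (fun s => (hdiff s).deriv) t 0
    rw [hconst, hE0]
    simp [Matrix.one_mulVec]
  -- symmetry of exp
  have hLsymm : Lᵀ = L := by
    rw [hL]
    rw [Matrix.transpose_mul, Matrix.transpose_mul, Matrix.transpose_transpose,
      Matrix.diagonal_transpose, Matrix.mul_assoc]
  have hEsymm : ∀ t, (E t)ᵀ = E t := by
    intro t
    rw [hE]
    rw [← Matrix.exp_transpose]
    congr 1
    rw [Matrix.transpose_neg, Matrix.transpose_smul, hLsymm]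
  have hdotones : ∀ t (y : Fin n → ℝ), ones ⬝ᵥ (E t *ᵥ y) = ones ⬝ᵥ y := by
    intro t y
    rw [Matrix.dotProduct_mulVec]
    have : ones ᵥ* E t = ones := by
      rw [← hEsymm t, Matrix.vecMul_transpose, hEones]
    rw [this]
  -- spectral gap
  have hgap : ∃ lam : ℝ, 0 < lam ∧
      ∀ y : Fin n → ℝ, ones ⬝ᵥ y = 0 → lam * (y ⬝ᵥ y) ≤ y ⬝ᵥ (L *ᵥ y) := by
    -- zero quadratic form plus zero mean forces zero
    have hdotself : ∀ y : Fin n → ℝ, y ⬝ᵥ y = ∑ i, y i * y i := fun y => rfl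
    have hdotself_nonneg : ∀ y : Fin n → ℝ, 0 ≤ y ⬝ᵥ y := fun y =>
      Finset.sum_nonneg fun i _ => mul_self_nonneg _
    have hqzero : ∀ y : Fin n → ℝ, y ⬝ᵥ (L *ᵥ y) = 0 → ones ⬝ᵥ y = 0 → y = 0 := by
      intro y hq h0
      have hterm : ∀ e : Fin k, y (src e) = y (snk e) := by
        intro e
        have hsum0 : ∑ e, w e * (y (src e) - y (snk e))^2 = 0 := by
          rw [← hqform]; exact hq
        have := (Finset.sum_eq_zero_iff_of_nonneg
          (fun e _ => mul_nonneg (hw e).le (sq_nonneg _))).1 hsum0 e (Finset.mem_univ e)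
        have hsq : (y (src e) - y (snk e))^2 = 0 := by
          rcases mul_eq_zero.1 this with h | h
          · exact absurd h (hw e).ne'
          · exact h
        have := pow_eq_zero_iff (n := 2) (by norm_num) |>.1 hsq
        linarith [sub_eq_zero.1 this]
      have hedge : ∀ a b : Fin n, 0 < A a b → y a = y b := by
        intro a b hab
        rw [hA] at hab
        obtain ⟨e, he⟩ := Finset.exists_ne_zero_of_sum_ne_zero hab.ne'
        by_cases hc : (src e = a ∧ snk e = b) ∨ (src e = b ∧ snk e = a)
        · rcases hc with ⟨h1, h2⟩ | ⟨h1, h2⟩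
          · rw [← h1, ← h2]; exact hterm e
          · rw [← h1, ← h2]; exact (hterm e).symm
        · exact absurd (if_neg hc) he.2
      have hconst : ∀ i j : Fin n, y i = y j := by
        intro i j
        induction hconn i j with
        | refl => rfl
        | tail _ hbc ih => exact ih.trans (hedge _ _ hbc)
      have i0 : Fin n := ⟨0, hn⟩
      have hyc : ∀ i, y i = y i0 := fun i => hconst i i0
      have hsum : ones ⬝ᵥ y = (n : ℝ) * y i0 := by
        simp only [dotProduct, hones, one_mul]
        rw [Finset.sum_congr rfl fun i _ => hyc i]
        simp [Finset.card_univ, mul_comm]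
      rw [hsum] at h0
      have : y i0 = 0 := by
        rcases mul_eq_zero.1 h0 with h | h
        · exact absurd h hn'
        · exact h
      funext i; rw [hyc i, this]; rfl
    by_cases hne : ∃ y : Fin n → ℝ, ones ⬝ᵥ y = 0 ∧ y ⬝ᵥ y = 1
    · -- compact minimization over the sphere in the hyperplane
      set S : Set (Fin n → ℝ) := {y | ones ⬝ᵥ y = 0 ∧ y ⬝ᵥ y = 1} with hS
      have hcont1 : Continuous fun y : Fin n → ℝ => ones ⬝ᵥ y := by
        simp only [dotProduct]
        exact continuous_finset_sum _ fun i _ => continuous_const.mul (continuous_apply i)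
      have hcont2 : Continuous fun y : Fin n → ℝ => y ⬝ᵥ y := by
        simp only [dotProduct]
        exact continuous_finset_sum _ fun i _ => (continuous_apply i).mul (continuous_apply i)
      have hqcont : Continuous fun y : Fin n → ℝ => y ⬝ᵥ (L *ᵥ y) := by
        simp only [dotProduct, Matrix.mulVec]
        exact continuous_finset_sum _ fun i _ => (continuous_apply i).mul
          (continuous_finset_sum _ fun j _ => continuous_const.mul (continuous_apply j))
      have hSclosed : IsClosed S := by
        have : S = (fun y : Fin n → ℝ => ones ⬝ᵥ y) ⁻¹' {0}
            ∩ (fun y : Fin n → ℝ => y ⬝ᵥ y) ⁻¹' {1} := rfl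
        rw [this]
        exact (isClosed_singleton.preimage hcont1).inter (isClosed_singleton.preimage hcont2)
      have hSsub : S ⊆ Metric.closedBall 0 1 := by
        intro y hy
        rw [Metric.mem_closedBall, dist_zero_right]
        refine (pi_norm_le_iff_of_nonneg zero_le_one).2 fun i => ?_
        rw [Real.norm_eq_abs, abs_le_one_iff_mul_self_le_one]
        calc y i * y i ≤ ∑ j, y j * y j :=
              Finset.single_le_sum (fun j _ => mul_self_nonneg (y j)) (Finset.mem_univ i)
          _ = 1 := hy.2
      have hScompact : IsCompact S :=
        Metric.isCompact_of_isClosed_isBounded hSclosed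
          (Metric.isBounded_closedBall.subset hSsub)
      obtain ⟨y₀, hy₀S, hmin⟩ := hScompact.exists_isMinOn hne hqcont.continuousOn
      have hlampos : 0 < y₀ ⬝ᵥ (L *ᵥ y₀) := by
        rcases (hqnonneg y₀).lt_or_eq with h | h
        · exact h
        · exfalso
          have hz := hqzero y₀ h.symm hy₀S.1
          have h1 : (0 : Fin n → ℝ) ⬝ᵥ (0 : Fin n → ℝ) = 1 := by rw [← hz]; exact hy₀S.2
          simp [dotProduct] at h1
      refine ⟨y₀ ⬝ᵥ (L *ᵥ y₀), hlampos, fun y hy => ?_⟩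
      rcases eq_or_ne y 0 with rfl | hy0
      · simp [Matrix.mulVec_zero]
      · have hyy : 0 < y ⬝ᵥ y := by
          rcases (hdotself_nonneg y).lt_or_eq with h | h
          · exact h
          · exfalso
            apply hy0
            funext i
            have := (Finset.sum_eq_zero_iff_of_nonneg
              (fun j _ => mul_self_nonneg (y j))).1 h.symm i (Finset.mem_univ i)
            exact mul_self_eq_zero.1 this
        set r : ℝ := Real.sqrt (y ⬝ᵥ y) with hr
        have hrpos : 0 < r := Real.sqrt_pos.2 hyy
        have hr2 : r * r = y ⬝ᵥ y := Real.mul_self_sqrt (hdotself_nonneg y)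
        have hmem : r⁻¹ • y ∈ S := by
          constructor
          · rw [dotProduct_smul, hy, smul_zero]
          · rw [smul_dotProduct, dotProduct_smul, smul_eq_mul, smul_eq_mul,
              ← mul_assoc]
            field_simp [hr2]
            rw [sq]; exact hr2.symm
        have hle := hmin hmem
        have hqscale : (r⁻¹ • y) ⬝ᵥ (L *ᵥ (r⁻¹ • y)) = (r⁻¹ * r⁻¹) * (y ⬝ᵥ (L *ᵥ y)) := by
          rw [Matrix.mulVec_smul, smul_dotProduct, dotProduct_smul,
            smul_eq_mul, smul_eq_mul, mul_assoc]
        rw [Set.mem_setOf_eq] at hle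
        have hle' : (y₀ ⬝ᵥ (L *ᵥ y₀)) * (y ⬝ᵥ y) ≤ y ⬝ᵥ (L *ᵥ y) := by
          have h2 := mul_le_mul_of_nonneg_right hle (hdotself_nonneg y)
          calc (y₀ ⬝ᵥ (L *ᵥ y₀)) * (y ⬝ᵥ y)
              ≤ ((r⁻¹ • y) ⬝ᵥ (L *ᵥ (r⁻¹ • y))) * (y ⬝ᵥ y) := h2
            _ = y ⬝ᵥ (L *ᵥ y) := by
                rw [hqscale, ← hr2]
                field_simp
        exact hle'
    · refine ⟨1, one_pos, fun y hy => ?_⟩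
      have hy0 : y = 0 := by
        by_contra h
        apply hne
        have hyy : 0 < y ⬝ᵥ y := by
          rcases (hdotself_nonneg y).lt_or_eq with h' | h'
          · exact h'
          · exfalso
            apply h
            funext i
            have := (Finset.sum_eq_zero_iff_of_nonneg
              (fun j _ => mul_self_nonneg (y j))).1 h'.symm i (Finset.mem_univ i)
            exact mul_self_eq_zero.1 this
        set r : ℝ := Real.sqrt (y ⬝ᵥ y) with hr
        have hrpos : 0 < r := Real.sqrt_pos.2 hyy
        have hr2 : r * r = y ⬝ᵥ y := Real.mul_self_sqrt (hdotself_nonneg y)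
        refine ⟨r⁻¹ • y, ?_, ?_⟩
        · rw [dotProduct_smul, hy, smul_zero]
        · rw [smul_dotProduct, dotProduct_smul, smul_eq_mul, smul_eq_mul,
            ← mul_assoc]
          field_simp [hr2]
          rw [sq]; exact hr2.symm
      subst hy0
      simp [Matrix.mulVec_zero]
  have hdsnn : ∀ y : Fin n → ℝ, 0 ≤ y ⬝ᵥ y :=
    fun y => Finset.sum_nonneg fun i _ => mul_self_nonneg _
  -- columns of M
  set u : Fin m → Fin n → ℝ := fun l i => M i l with hu
  have huval : ∀ l, u l = fun i => if i = v l then 1 else 0 := by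
    intro l; funext i; exact hM i l
  -- the integrand as a sum of quadratic forms
  set f : ℝ → ℝ := fun t => ∑ l, (E t *ᵥ u l) ⬝ᵥ (L *ᵥ (E t *ᵥ u l)) with hf
  have hfg : ∀ t, (∑ i, ∑ j, (g t i j)^2) = f t := by
    intro t
    rw [Finset.sum_comm, hf]
    refine Finset.sum_congr rfl fun l _ => ?_
    have hcol : ∀ e, g t e l = Real.sqrt (w e)
        * ((E t *ᵥ u l) (src e) - (E t *ᵥ u l) (snk e)) := by
      intro e
      rw [hg]
      have h1 : ((Matrix.diagonal fun e => Real.sqrt (w e)) * Rᵀ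
            * NormedSpace.exp (-(t • L)) * M) e l
          = (((Matrix.diagonal fun e => Real.sqrt (w e)) * Rᵀ
            * NormedSpace.exp (-(t • L))) *ᵥ u l) e := by
        simp [Matrix.mul_apply, Matrix.mulVec, dotProduct, hu]
      rw [h1, ← Matrix.mulVec_mulVec, ← Matrix.mulVec_mulVec, hRT]
      rw [Matrix.mulVec_diagonal]
    calc ∑ e, (g t e l)^2
        = ∑ e, w e * ((E t *ᵥ u l) (src e) - (E t *ᵥ u l) (snk e))^2 := by
          refine Finset.sum_congr rfl fun e _ => ?_
          rw [hcol e, mul_pow, Real.sq_sqrt (hw e).le]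
      _ = (E t *ᵥ u l) ⬝ᵥ (L *ᵥ (E t *ᵥ u l)) := (hqform _).symm
  have hfnn : ∀ t, 0 ≤ f t := fun t => Finset.sum_nonneg fun l _ => hqnonneg _
  -- the candidate antiderivative
  set F : ℝ → ℝ := fun t => ∑ l, (E t *ᵥ u l) ⬝ᵥ (E t *ᵥ u l) with hF
  set G : ℝ → ℝ := fun t => -(1/2) * F t with hG
  have hderivG : ∀ t, HasDerivAt G (f t) t := by
    intro t
    have hF' : HasDerivAt F (∑ l, -2 * ((E t *ᵥ u l) ⬝ᵥ (L *ᵥ (E t *ᵥ u l)))) t := by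
      apply HasDerivAt.fun_sum
      intro l _
      exact stmt15_dot_hasDerivAt L (u l) t
    have h2 := hF'.const_mul (-(1/2) : ℝ)
    refine h2.congr_deriv ?_
    rw [hf, Finset.mul_sum]
    exact Finset.sum_congr rfl fun l _ => by ring
  -- mean-zero parts of the columns
  set yv : Fin m → Fin n → ℝ := fun l => u l - (n:ℝ)⁻¹ • ones with hyv
  have honesu : ∀ l, ones ⬝ᵥ u l = 1 := by
    intro l
    simp only [dotProduct, hones, one_mul, huval]
    simp
  have honesones : ones ⬝ᵥ ones = (n:ℝ) := by
    simp [dotProduct, hones]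
  have honesy : ∀ l, ones ⬝ᵥ yv l = 0 := by
    intro l
    rw [hyv]
    rw [dotProduct_sub, dotProduct_smul, honesu, honesones]
    simp [hn']
  have hdot_decomp : ∀ t l, (E t *ᵥ u l) ⬝ᵥ (E t *ᵥ u l)
      = (n:ℝ)⁻¹ + (E t *ᵥ yv l) ⬝ᵥ (E t *ᵥ yv l) := by
    intro t l
    have hdecomp : E t *ᵥ u l = (n:ℝ)⁻¹ • ones + E t *ᵥ yv l := by
      have hu' : u l = (n:ℝ)⁻¹ • ones + yv l := by
        funext i
        simp only [hyv, Pi.add_apply, Pi.sub_apply, Pi.smul_apply, smul_eq_mul]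
        ring
      rw [hu', Matrix.mulVec_add, Matrix.mulVec_smul, hEones]
    rw [hdecomp]
    have expand : ∀ a b : Fin n → ℝ, (a + b) ⬝ᵥ (a + b)
        = a ⬝ᵥ a + a ⬝ᵥ b + b ⬝ᵥ a + b ⬝ᵥ b := by
      intro a b
      rw [add_dotProduct, dotProduct_add, dotProduct_add]
      ring
    rw [expand]
    have h1 : ((n:ℝ)⁻¹ • ones) ⬝ᵥ ((n:ℝ)⁻¹ • ones) = (n:ℝ)⁻¹ := by
      rw [smul_dotProduct, dotProduct_smul, honesones]
      simp [smul_eq_mul]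
      field_simp
    have h2 : ((n:ℝ)⁻¹ • ones) ⬝ᵥ (E t *ᵥ yv l) = 0 := by
      rw [smul_dotProduct, hdotones, honesy, smul_zero]
    have h3 : (E t *ᵥ yv l) ⬝ᵥ ((n:ℝ)⁻¹ • ones) = 0 := by
      rw [dotProduct_comm]; exact h2
    rw [h1, h2, h3]
    ring
  -- each mean-zero part decays to zero
  obtain ⟨lam, hlam, hgap'⟩ := hgap
  have htend : ∀ l, Tendsto (fun t => (E t *ᵥ yv l) ⬝ᵥ (E t *ᵥ yv l)) atTop (nhds 0) := by
    intro l
    set h : ℝ → ℝ := fun t => (E t *ᵥ yv l) ⬝ᵥ (E t *ᵥ yv l) with hh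
    have hmean : ∀ t, ones ⬝ᵥ (E t *ᵥ yv l) = 0 := fun t => by rw [hdotones, honesy]
    have hnn : ∀ t, 0 ≤ h t := fun t => hdsnn _
    have hd : ∀ t, HasDerivAt h (-2 * ((E t *ᵥ yv l) ⬝ᵥ (L *ᵥ (E t *ᵥ yv l)))) t :=
      fun t => stmt15_dot_hasDerivAt L (yv l) t
    have hbound : ∀ t, -2 * ((E t *ᵥ yv l) ⬝ᵥ (L *ᵥ (E t *ᵥ yv l))) ≤ -2 * (lam * h t) := by
      intro t
      have := hgap' (E t *ᵥ yv l) (hmean t)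
      linarith
    have hexp : ∀ t : ℝ, HasDerivAt (fun t : ℝ => Real.exp (2*lam*t))
        (Real.exp (2*lam*t) * (2*lam)) t := by
      intro t
      simpa using ((hasDerivAt_id t).const_mul (2*lam)).exp
    set ρ : ℝ → ℝ := fun t => h t * Real.exp (2 * lam * t) with hρ
    have hdρ : ∀ t, HasDerivAt ρ
        ((-2 * ((E t *ᵥ yv l) ⬝ᵥ (L *ᵥ (E t *ᵥ yv l)))) * Real.exp (2*lam*t)
          + h t * (Real.exp (2*lam*t) * (2*lam))) t :=
      fun t => (hd t).mul (hexp t)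
    have hρanti : Antitone ρ := by
      apply antitone_of_deriv_nonpos
      · exact fun t => (hdρ t).differentiableAt
      · intro t
        rw [(hdρ t).deriv]
        have h1 := mul_le_mul_of_nonneg_right (hbound t) (Real.exp_pos (2*lam*t)).le
        nlinarith [Real.exp_pos (2*lam*t), hnn t]
    have hbd : ∀ t : ℝ, 0 ≤ t → h t ≤ h 0 * Real.exp (-(2*lam*t)) := by
      intro t ht
      have h1 : ρ t ≤ ρ 0 := hρanti ht
      have h2 : h t * Real.exp (2*lam*t) ≤ h 0 := by
        have : ρ 0 = h 0 := by rw [hρ]; simp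
        rw [← this]; exact h1
      have h3 : (0:ℝ) < Real.exp (2*lam*t) := Real.exp_pos _
      rw [Real.exp_neg]
      calc h t = (h t * Real.exp (2*lam*t)) * (Real.exp (2*lam*t))⁻¹ := by field_simp
        _ ≤ h 0 * (Real.exp (2*lam*t))⁻¹ :=
            mul_le_mul_of_nonneg_right h2 (inv_nonneg.2 h3.le)
    have hupper : Tendsto (fun t => h 0 * Real.exp (-(2*lam*t))) atTop (nhds 0) := by
      have hexp0 : Tendsto (fun t : ℝ => Real.exp (-(2*lam*t))) atTop (nhds 0) := by
        have h2' : Tendsto (fun t : ℝ => 2*lam*t) atTop atTop :=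
          Tendsto.const_mul_atTop (by positivity : (0:ℝ) < 2*lam) tendsto_id
        have h3' := Real.tendsto_exp_neg_atTop_nhds_zero.comp h2'
        simpa [Function.comp_def] using h3'
      simpa using hexp0.const_mul (h 0)
    exact tendsto_of_tendsto_of_tendsto_of_le_of_le' tendsto_const_nhds hupper
      (Eventually.of_forall hnn) ((eventually_ge_atTop 0).mono fun t ht => hbd t ht)
  -- limit of F
  have hFlim : Tendsto F atTop (nhds ((m:ℝ) * (n:ℝ)⁻¹)) := by
    have h1 : Tendsto F atTop (nhds (∑ _l : Fin m, ((n:ℝ)⁻¹ + 0))) := by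
      rw [hF]
      refine tendsto_finset_sum _ fun l _ => ?_
      have heq : (fun t => (E t *ᵥ u l) ⬝ᵥ (E t *ᵥ u l))
          = fun t => (n:ℝ)⁻¹ + (E t *ᵥ yv l) ⬝ᵥ (E t *ᵥ yv l) :=
        funext fun t => hdot_decomp t l
      rw [heq]
      exact tendsto_const_nhds.add (htend l)
    simpa [Finset.sum_const, Finset.card_univ, nsmul_eq_mul] using h1
  have hGlim : Tendsto G atTop (nhds (-(1/2) * ((m:ℝ) * (n:ℝ)⁻¹))) := by
    rw [hG]
    exact hFlim.const_mul _
  -- put everything together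
  have hderiv' : ∀ x ∈ Set.Ici (0:ℝ),
      HasDerivAt G ((fun t : ℝ => ∑ i, ∑ j, (g t i j)^2) x) x := by
    intro x _
    have := hderivG x
    rw [← hfg x] at this
    exact this
  have hpos' : ∀ x ∈ Set.Ioi (0:ℝ), 0 ≤ (fun t : ℝ => ∑ i, ∑ j, (g t i j)^2) x := by
    intro x _
    have := hfnn x
    rw [← hfg x] at this
    exact this
  constructor
  · exact integrableOn_Ioi_deriv_of_nonneg' hderiv' hpos' hGlim
  · have hval := integral_Ioi_of_hasDerivAt_of_nonneg' hderiv' hpos' hGlim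
    rw [hval]
    have hG0 : G 0 = -(1/2) * (m : ℝ) := by
      have hF0 : F 0 = (m : ℝ) := by
        have : F 0 = ∑ l : Fin m, (E 0 *ᵥ u l) ⬝ᵥ (E 0 *ᵥ u l) := rfl
        rw [this]
        have h1 : ∀ l : Fin m, (E 0 *ᵥ u l) ⬝ᵥ (E 0 *ᵥ u l) = 1 := by
          intro l
          rw [hE0, Matrix.one_mulVec, huval l]
          simp [dotProduct]
        simp [h1]
      have hG0' : G 0 = -(1/2) * F 0 := rfl
      rw [hG0', hF0]
    have htr : Matrix.trace (Mᵀ * Wo * M) = (m:ℝ) * ((1:ℝ)/2 - 1/(2*(n:ℝ))) := by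
      have hdiag : ∀ l : Fin m, (Mᵀ * Wo * M) l l = Wo (v l) (v l) := by
        intro l
        rw [Matrix.mul_apply]
        have h1 : ∀ j, (Mᵀ * Wo) l j = Wo (v l) j := by
          intro j
          rw [Matrix.mul_apply]
          simp [Matrix.transpose_apply, hM, ite_mul]
        calc ∑ j, (Mᵀ * Wo) l j * M j l = ∑ j, Wo (v l) j * M j l :=
              Finset.sum_congr rfl fun j _ => by rw [h1]
          _ = Wo (v l) (v l) := by simp [hM, mul_ite]
      have hWoentry : ∀ l : Fin m, Wo (v l) (v l) = (1:ℝ)/2 - 1/(2*(n:ℝ)) := by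
        intro l
        rw [hWo]
        simp [Matrix.sub_apply, Matrix.smul_apply, Matrix.one_apply_eq, hones, smul_eq_mul]
      rw [Matrix.trace]
      calc ∑ l, (Mᵀ * Wo * M).diag l = ∑ l : Fin m, ((1:ℝ)/2 - 1/(2*(n:ℝ))) :=
            Finset.sum_congr rfl fun l _ => by rw [Matrix.diag_apply, hdiag l, hWoentry l]
        _ = (m:ℝ) * ((1:ℝ)/2 - 1/(2*(n:ℝ))) := by
            simp [Finset.sum_const, Finset.card_univ, nsmul_eq_mul]
            ring
    rw [htr, hG0]
    field_simp
    ring
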